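/- Let T = t·A·B·A⁻¹ ∈ GL(2,ℝ) where t > 0, A ∈ GL(2,ℝ), and B is a rotation by angle θ with cos θ > 0. Let a ∈ ℝ² be nonzero with ‖T⁻¹(a)‖ < 1 and |sin θ| ≤ ‖T⁻¹(a)‖ / (‖A‖‖A⁻¹‖). Then T̄ₐ(x) = (a+T(x))/‖a+T(x)‖ has a fixed point on S¹. -/

import Mathlib

/-- The "affine" map `x ↦ (a + T(x))/‖a + T(x)‖` induced on the unit sphere. -/
noncomputable def affAct {m : ℕ} (A : Matrix (Fin m) (Fin m) ℝ)
    (a x : EuclideanSpace ℝ (Fin m)) : EuclideanSpace ℝ (Fin m) :=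
  ‖a + Matrix.toEuclideanLin A x‖⁻¹ • (a + Matrix.toEuclideanLin A x)

namespace Stmt16Aux



noncomputable abbrev φ (M : Matrix (Fin 2) (Fin 2) ℝ) :
    EuclideanSpace ℝ (Fin 2) →L[ℝ] EuclideanSpace ℝ (Fin 2) :=
  Matrix.toEuclideanCLM (𝕜 := ℝ) M

lemma clm_eq_lin (M : Matrix (Fin 2) (Fin 2) ℝ) (x : EuclideanSpace ℝ (Fin 2)) :
    Matrix.toEuclideanLin M x = φ M x := by
  rw [← Matrix.coe_toEuclideanCLM_eq_toEuclideanLin]; rfl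

open Matrix

lemma clm_mul_apply (M N : Matrix (Fin 2) (Fin 2) ℝ) (x : EuclideanSpace ℝ (Fin 2)) :
    φ (M * N) x = φ M (φ N x) := by
  simp only [φ, _root_.map_mul, ContinuousLinearMap.mul_apply]

lemma clm_one_apply (x : EuclideanSpace ℝ (Fin 2)) :
    φ (1 : Matrix (Fin 2) (Fin 2) ℝ) x = x := by
  simp only [φ, _root_.map_one, ContinuousLinearMap.one_apply]

lemma clm_smul_apply (r : ℝ) (M : Matrix (Fin 2) (Fin 2) ℝ) (x : EuclideanSpace ℝ (Fin 2)) :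
    φ (r • M) x = r • φ M x := by
  simp only [φ, _root_.map_smul, ContinuousLinearMap.smul_apply]

lemma clm_sub_apply (M N : Matrix (Fin 2) (Fin 2) ℝ) (x : EuclideanSpace ℝ (Fin 2)) :
    φ (M - N) x = φ M x - φ N x := by
  simp only [φ, _root_.map_sub, ContinuousLinearMap.sub_apply]

/-- Orthogonal matrices act isometrically. -/
lemma isom (O : Matrix (Fin 2) (Fin 2) ℝ) (h : Oᴴ * O = 1) (v : EuclideanSpace ℝ (Fin 2)) :
    ‖φ O v‖ = ‖v‖ := by
  have hadj : ContinuousLinearMap.adjoint (φ O) (φ O v) = v := by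
    rw [← ContinuousLinearMap.star_eq_adjoint, ← StarHomClass.map_star, Matrix.star_eq_conjTranspose,
      ← clm_mul_apply, h, clm_one_apply]
  have key : (inner ℝ (φ O v) (φ O v) : ℝ) = inner ℝ v v := by
    have h2 := ContinuousLinearMap.adjoint_inner_left (𝕜 := ℝ) (φ O) v (φ O v)
    rw [hadj] at h2
    exact h2.symm
  rw [real_inner_self_eq_norm_mul_norm, real_inner_self_eq_norm_mul_norm] at key
  exact (mul_self_inj_of_nonneg (norm_nonneg _) (norm_nonneg _)).1 key

/-- Lower bound for the action of an invertible matrix. -/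
lemma lower (P Q : Matrix (Fin 2) (Fin 2) ℝ) (h : Q * P = 1) (v : EuclideanSpace ℝ (Fin 2)) :
    ‖v‖ ≤ ‖φ Q‖ * ‖φ P v‖ := by
  have h2 : v = φ Q (φ P v) := by rw [← clm_mul_apply, h, clm_one_apply]
  calc ‖v‖ = ‖φ Q (φ P v)‖ := by rw [← h2]
    _ ≤ ‖φ Q‖ * ‖φ P v‖ := (φ Q).le_opNorm _

lemma cont_apply (a : EuclideanSpace ℝ (Fin 2)) :
    Continuous (fun M : Matrix (Fin 2) (Fin 2) ℝ => φ M a) := by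
  let L : Matrix (Fin 2) (Fin 2) ℝ →ₗ[ℝ] EuclideanSpace ℝ (Fin 2) :=
    { toFun := fun M => φ M a
      map_add' := by
        intro M N; simp only [φ, _root_.map_add, ContinuousLinearMap.add_apply]
      map_smul' := by
        intro r M
        simp only [φ, _root_.map_smul, ContinuousLinearMap.smul_apply, RingHom.id_apply] }
  exact L.continuous_of_finiteDimensional

end Stmt16Aux

set_option maxHeartbeats 1600000 in
open Stmt16Aux in
theorem stmt16 (T A : GL (Fin 2) ℝ) (t θ : ℝ) (ht : 0 < t) (hcos : 0 < Real.cos θ)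
    (hT : (T : Matrix (Fin 2) (Fin 2) ℝ) =
      t • ((A : Matrix (Fin 2) (Fin 2) ℝ) *
           !![Real.cos θ, -Real.sin θ; Real.sin θ, Real.cos θ] *
           ((A⁻¹ : GL (Fin 2) ℝ) : Matrix (Fin 2) (Fin 2) ℝ)))
    (a : EuclideanSpace ℝ (Fin 2)) (ha : a ≠ 0)
    (hlt : ‖Matrix.toEuclideanLin ((T⁻¹ : GL (Fin 2) ℝ) : Matrix (Fin 2) (Fin 2) ℝ) a‖ < 1)
    (hsin : |Real.sin θ| ≤
      ‖Matrix.toEuclideanLin ((T⁻¹ : GL (Fin 2) ℝ) : Matrix (Fin 2) (Fin 2) ℝ) a‖ /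
        (‖Matrix.toEuclideanCLM (𝕜 := ℝ) (A : Matrix (Fin 2) (Fin 2) ℝ)‖ *
         ‖Matrix.toEuclideanCLM (𝕜 := ℝ) ((A⁻¹ : GL (Fin 2) ℝ) : Matrix (Fin 2) (Fin 2) ℝ)‖)) :
    ∃ x : EuclideanSpace ℝ (Fin 2), ‖x‖ = 1 ∧
      affAct (T : Matrix (Fin 2) (Fin 2) ℝ) a x = x := by
  have hpyth : Real.sin θ ^ 2 + Real.cos θ ^ 2 = 1 := Real.sin_sq_add_cos_sq θ
  set s := Real.sin θ with hs_def
  set co := Real.cos θ with hco_def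
  set Tm : Matrix (Fin 2) (Fin 2) ℝ := (T : Matrix (Fin 2) (Fin 2) ℝ) with hTm_def
  set Am : Matrix (Fin 2) (Fin 2) ℝ := (A : Matrix (Fin 2) (Fin 2) ℝ) with hAm_def
  set Ai : Matrix (Fin 2) (Fin 2) ℝ := ((A⁻¹ : GL (Fin 2) ℝ) : Matrix (Fin 2) (Fin 2) ℝ)
    with hAi_def
  set Ti : Matrix (Fin 2) (Fin 2) ℝ := ((T⁻¹ : GL (Fin 2) ℝ) : Matrix (Fin 2) (Fin 2) ℝ)
    with hTi_def
  rw [clm_eq_lin] at hlt hsin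
  have hAAi : Am * Ai = 1 := A.mul_inv
  have hAiA : Ai * Am = 1 := A.inv_mul
  have hTiT : Ti * Tm = 1 := T.inv_mul
  have hTTi : Tm * Ti = 1 := T.mul_inv
  set B : Matrix (Fin 2) (Fin 2) ℝ := !![co, -s; s, co] with hB_def
  set J : Matrix (Fin 2) (Fin 2) ℝ := !![0, -1; 1, 0] with hJ_def
  set Mc : ℝ → Matrix (Fin 2) (Fin 2) ℝ :=
    fun c => !![c - t * co, -(t * s); t * s, c - t * co] with hMc_def
  set d : ℝ → ℝ := fun c => (c - t * co) ^ 2 + (t * s) ^ 2 with hd_def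
  have inner_key : ∀ c, (c • (1 : Matrix (Fin 2) (Fin 2) ℝ) - t • B) * Mc c = d c • 1 := by
    intro c
    ext i j
    fin_cases i <;> fin_cases j <;>
      simp [hB_def, hMc_def, hd_def, Matrix.mul_apply, Fin.sum_univ_two, Matrix.one_apply] <;>
      ring
  have key : ∀ c, (c • (1 : Matrix (Fin 2) (Fin 2) ℝ) - Tm) * (Am * Mc c * Ai) = d c • 1 := by
    intro c
    have h3 : Am * ((c • (1 : Matrix (Fin 2) (Fin 2) ℝ) - t • B) * Mc c) * Ai = d c • 1 := by
      rw [inner_key c, mul_smul_comm, mul_one, smul_mul_assoc, hAAi]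
    rw [← h3, hT]
    simp only [sub_mul, mul_sub, smul_mul_assoc, mul_smul_comm, one_mul, mul_assoc]
    rw [← mul_assoc Ai Am, hAiA, one_mul]
  set w : ℝ → EuclideanSpace ℝ (Fin 2) := fun c => φ (Am * Mc c * Ai) a with hw_def
  set g : ℝ → ℝ := fun c => (d c)⁻¹ * ‖w c‖ with hg_def
  have hwcont : Continuous w := by
    have h1 : Continuous Mc := by
      have h2 : Mc = fun c => c • (1 : Matrix (Fin 2) (Fin 2) ℝ) +
          !![-(t * co), -(t * s); t * s, -(t * co)] := by
        funext c
        ext i j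
        fin_cases i <;> fin_cases j <;> simp [hMc_def, Matrix.one_apply] <;> ring
      rw [h2]
      exact (continuous_id.smul continuous_const).add continuous_const
    exact (cont_apply a).comp ((continuous_const.matrix_mul h1).matrix_mul continuous_const)
  have hdcont : Continuous d := by
    exact (((continuous_id.sub continuous_const).pow 2).add continuous_const)
  -- fixed point equation for any c with d c ≠ 0
  have fix : ∀ c, d c ≠ 0 → a + φ Tm ((d c)⁻¹ • w c) = c • ((d c)⁻¹ • w c) := by
    intro c hdc
    have h1 : φ ((c • (1 : Matrix (Fin 2) (Fin 2) ℝ) - Tm) * (Am * Mc c * Ai)) a =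
        φ ((d c) • (1 : Matrix (Fin 2) (Fin 2) ℝ)) a := by rw [key c]
    rw [clm_mul_apply, clm_smul_apply, clm_one_apply, clm_sub_apply, clm_smul_apply,
      clm_one_apply] at h1
    -- h1 : c • w c - φ Tm (w c) = d c • a
    have h2 : φ Tm ((d c)⁻¹ • w c) = (d c)⁻¹ • φ Tm (w c) := map_smul _ _ _
    have h3 : φ Tm (w c) = c • w c - d c • a := by rw [← h1]; module
    rw [h2, h3]
    match_scalars <;> field_simp <;> ring
  -- value at 0
  have hd0pos : 0 < d 0 := by
    have h1 : 0 < t * co := mul_pos ht hcos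
    simp only [hd_def]
    nlinarith [sq_nonneg (t * s)]
  have hg0 : g 0 < 1 := by
    have h2 := key 0
    rw [zero_smul, zero_sub, neg_mul] at h2
    set X := Am * Mc 0 * Ai with hX_def
    have h1 : Tm * (-(d 0)⁻¹ • X) = 1 := by
      have h3 : Tm * X = -(d 0) • 1 := by
        rw [← neg_inj, h2, neg_smul, neg_neg]
      rw [mul_smul_comm, h3, smul_smul, neg_mul_neg, inv_mul_cancel₀ hd0pos.ne', one_smul]
    have h4 : Ti = -(d 0)⁻¹ • X := by
      calc Ti = Ti * (Tm * (-(d 0)⁻¹ • X)) := by rw [h1, mul_one]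
        _ = (Ti * Tm) * (-(d 0)⁻¹ • X) := by rw [mul_assoc]
        _ = -(d 0)⁻¹ • X := by rw [hTiT, one_mul]
    have h5 : φ Ti a = -(d 0)⁻¹ • w 0 := by
      rw [h4, clm_smul_apply]
    have h6 : ‖φ Ti a‖ = (d 0)⁻¹ * ‖w 0‖ := by
      rw [h5, norm_smul, Real.norm_eq_abs, abs_neg, abs_of_pos (inv_pos.2 hd0pos)]
    calc g 0 = ‖φ Ti a‖ := h6.symm
      _ < 1 := hlt
  -- choice of right endpoint
  obtain ⟨c₀, hc₀nonneg, hdpos, hgc₀⟩ :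
      ∃ c₀, 0 ≤ c₀ ∧ (∀ c ∈ Set.Icc (0:ℝ) c₀, 0 < d c) ∧ 1 ≤ g c₀ := by
    by_cases hs0 : s = 0
    · -- sin θ = 0, so cos θ = 1 and T = t • 1
      have hco1 : co = 1 := by nlinarith
      have hB1 : B = 1 := by
        ext i j
        fin_cases i <;> fin_cases j <;> simp [hB_def, hco1, hs0, Matrix.one_apply]
      have hTm1 : Tm = t • (1 : Matrix (Fin 2) (Fin 2) ℝ) := by
        rw [hT, hB1, mul_one, hAAi]
      have hTi1 : t • Ti = 1 := by
        have h1 := hTiT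
        rw [hTm1, mul_smul_comm, mul_one] at h1
        exact h1
      have hna : ‖a‖ < t := by
        have h2 : φ Ti a = t⁻¹ • a := by
          have h3 : Ti = t⁻¹ • (1 : Matrix (Fin 2) (Fin 2) ℝ) := by
            calc Ti = t⁻¹ • (t • Ti) := by
                  rw [smul_smul, inv_mul_cancel₀ ht.ne', one_smul]
              _ = t⁻¹ • 1 := by rw [hTi1]
          rw [h3, clm_smul_apply, clm_one_apply]
        rw [h2, norm_smul, Real.norm_eq_abs, abs_of_pos (inv_pos.2 ht)] at hlt
        calc ‖a‖ = t * (t⁻¹ * ‖a‖) := by field_simp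
          _ < t * 1 := by exact mul_lt_mul_of_pos_left hlt ht
          _ = t := mul_one t
      have hapos : 0 < ‖a‖ := norm_pos_iff.2 ha
      refine ⟨t - ‖a‖, by linarith, ?_, ?_⟩
      · intro c hc
        simp only [hd_def, hco1, hs0]
        have h1 : c ≤ t - ‖a‖ := hc.2
        nlinarith
      · have hM : Mc (t - ‖a‖) = (-‖a‖) • (1 : Matrix (Fin 2) (Fin 2) ℝ) := by
          ext i j
          fin_cases i <;> fin_cases j <;>
            simp [hMc_def, hco1, hs0, Matrix.one_apply]
        have hwv : w (t - ‖a‖) = (-‖a‖) • a := by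
          simp only [hw_def, hM]
          rw [mul_smul_comm, mul_one, smul_mul_assoc, hAAi, clm_smul_apply, clm_one_apply]
        have hdv : d (t - ‖a‖) = ‖a‖ ^ 2 := by
          simp only [hd_def, hco1, hs0]
          ring
        simp only [hg_def, hwv, hdv, norm_smul, Real.norm_eq_abs, abs_neg, abs_of_pos hapos]
        have hval : (‖a‖ ^ 2)⁻¹ * (‖a‖ * ‖a‖) = 1 := by
          rw [← sq]
          exact inv_mul_cancel₀ (pow_ne_zero _ hapos.ne')
        rw [hval]
    · -- sin θ ≠ 0
      set α := ‖φ Am‖ with hα_def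
      set β := ‖φ Ai‖ with hβ_def
      have hαβ : 1 ≤ α * β := by
        have h1 : (1 : EuclideanSpace ℝ (Fin 2) →L[ℝ] EuclideanSpace ℝ (Fin 2)) =
            φ Am * φ Ai := by rw [← map_mul, hAAi, map_one]
        calc (1 : ℝ) = ‖(1 : EuclideanSpace ℝ (Fin 2) →L[ℝ] EuclideanSpace ℝ (Fin 2))‖ :=
              (norm_one).symm
          _ = ‖φ Am * φ Ai‖ := by rw [h1]
          _ ≤ α * β := norm_mul_le _ _
      have hαnn : 0 ≤ α := norm_nonneg _
      have hβnn : 0 ≤ β := norm_nonneg _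
      have hαβpos : 0 < α * β := lt_of_lt_of_le one_pos hαβ
      have hau : φ Tm (φ Ti a) = a := by rw [← clm_mul_apply, hTTi, clm_one_apply]
      have hrpos : 0 < ‖φ Ti a‖ := by
        rw [norm_pos_iff]
        intro h0
        apply ha
        rw [← hau, h0, map_zero]
      have hspos : 0 < |s| := abs_pos.2 hs0
      have htspos : 0 < |t * s| := by rw [abs_mul, abs_of_pos ht]; positivity
      refine ⟨t * co, (mul_pos ht hcos).le, ?_, ?_⟩
      · intro c hc
        have h2 : t * s ≠ 0 := mul_ne_zero ht.ne' hs0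
        have h1 : (0:ℝ) < (t * s) ^ 2 :=
          lt_of_le_of_ne (sq_nonneg _) (Ne.symm (pow_ne_zero 2 h2))
        simp only [hd_def]
        exact add_pos_of_nonneg_of_pos (sq_nonneg _) h1
      · -- 1 ≤ g (t * co)
        have hMc : Mc (t * co) = (t * s) • J := by
          ext i j
          fin_cases i <;> fin_cases j <;> simp [hMc_def, hJ_def]
        have hJB : J * B = !![-s, -co; co, -s] := by
          rw [hJ_def, hB_def]
          ext i j
          fin_cases i <;> fin_cases j <;>
            simp [Matrix.mul_apply, Fin.sum_univ_two]
        have hortho : (J * B).conjTranspose * (J * B) = 1 := by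
          rw [hJB]
          have htr : (!![-s, -co; co, -s]).conjTranspose = !![-s, co; -co, -s] := by
            rw [Matrix.conjTranspose_eq_transpose_of_trivial]
            ext i j
            fin_cases i <;> fin_cases j <;> simp [Matrix.transpose_apply]
          rw [htr]
          ext i j
          fin_cases i <;> fin_cases j <;>
            simp [Matrix.mul_apply, Fin.sum_univ_two, Matrix.one_apply] <;> nlinarith [hpyth]
        set X := ‖φ (Am * (J * B) * Ai) (φ Ti a)‖ with hX_def
        have hchain : φ (Am * J * Ai) a = t • φ (Am * (J * B) * Ai) (φ Ti a) := by
          have h2 : Am * J * Ai * (t • (Am * B * Ai)) = t • (Am * (J * B) * Ai) := by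
            rw [mul_smul_comm]
            congr 1
            calc Am * J * Ai * (Am * B * Ai)
                = Am * (J * (Ai * (Am * (B * Ai)))) := by simp only [mul_assoc]
              _ = Am * (J * (B * Ai)) := by rw [← mul_assoc Ai Am, hAiA, one_mul]
              _ = Am * (J * B) * Ai := by simp only [mul_assoc]
          conv_lhs => rw [← hau]
          rw [← clm_mul_apply, hT, h2, clm_smul_apply]
        have hbound : ‖φ Ti a‖ ≤ α * β * X := by
          have h1 : ‖φ Ti a‖ ≤ α * ‖φ Ai (φ Ti a)‖ := lower Ai Am hAAi _
          have h2 : ‖φ (J * B) (φ Ai (φ Ti a))‖ = ‖φ Ai (φ Ti a)‖ := isom _ hortho _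
          have h3 : ‖φ (J * B) (φ Ai (φ Ti a))‖ ≤
              β * ‖φ Am (φ (J * B) (φ Ai (φ Ti a)))‖ := lower Am Ai hAiA _
          have h4 : φ (Am * (J * B) * Ai) (φ Ti a) = φ Am (φ (J * B) (φ Ai (φ Ti a))) := by
            rw [mul_assoc, clm_mul_apply, clm_mul_apply]
          rw [hX_def, h4]
          calc ‖φ Ti a‖ ≤ α * ‖φ Ai (φ Ti a)‖ := h1
            _ = α * ‖φ (J * B) (φ Ai (φ Ti a))‖ := by rw [h2]
            _ ≤ α * (β * ‖φ Am (φ (J * B) (φ Ai (φ Ti a)))‖) :=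
                mul_le_mul_of_nonneg_left h3 hαnn
            _ = α * β * ‖φ Am (φ (J * B) (φ Ai (φ Ti a)))‖ := by ring
        have hsX : |s| ≤ X := by
          have h1 : |s| * (α * β) ≤ ‖φ Ti a‖ := by
            rw [← le_div_iff₀ hαβpos]
            exact hsin
          nlinarith
        have hwn : ‖w (t * co)‖ = |t * s| * (t * X) := by
          simp only [hw_def, hMc]
          rw [mul_smul_comm, smul_mul_assoc, clm_smul_apply, hchain, norm_smul, norm_smul,
            Real.norm_eq_abs, Real.norm_eq_abs, abs_of_pos ht]
        have hdv : d (t * co) = (t * s) ^ 2 := by simp only [hd_def]; ring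
        have hts2 : ((t * s) ^ 2) ≠ 0 := pow_ne_zero _ (mul_ne_zero ht.ne' hs0)
        have hkey2 : |t * s| ≤ t * X := by
          rw [abs_mul, abs_of_pos ht]
          exact mul_le_mul_of_nonneg_left hsX ht.le
        have hfin : (1:ℝ) ≤ (d (t * co))⁻¹ * ‖w (t * co)‖ := by
          calc (1:ℝ) = ((t * s) ^ 2)⁻¹ * (|t * s| * |t * s|) := by
                rw [← sq, sq_abs, inv_mul_cancel₀ hts2]
            _ ≤ ((t * s) ^ 2)⁻¹ * (|t * s| * (t * X)) := by
                refine mul_le_mul_of_nonneg_left ?_ (inv_nonneg.2 (sq_nonneg _))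
                exact mul_le_mul_of_nonneg_left hkey2 (abs_nonneg _)
            _ = (d (t * co))⁻¹ * ‖w (t * co)‖ := by rw [hwn, hdv]
        simpa only [hg_def] using hfin
  -- intermediate value theorem
  have hgcont : ContinuousOn g (Set.Icc 0 c₀) := by
    apply ContinuousOn.mul
    · exact ContinuousOn.inv₀ hdcont.continuousOn (fun c hc => (hdpos c hc).ne')
    · exact hwcont.norm.continuousOn
  obtain ⟨c, hcmem, hgc⟩ := intermediate_value_Icc hc₀nonneg hgcont ⟨hg0.le, hgc₀⟩
  have hdc : 0 < d c := hdpos c hcmem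
  have hcpos : 0 < c := by
    rcases hcmem.1.lt_or_eq with h | h
    · exact h
    · exfalso; rw [← h] at hgc; rw [hgc] at hg0; exact lt_irrefl 1 hg0
  set x := (d c)⁻¹ • w c with hx_def
  have hxnorm : ‖x‖ = 1 := by
    rw [hx_def, norm_smul, Real.norm_eq_abs, abs_of_pos (inv_pos.2 hdc)]
    exact hgc
  refine ⟨x, hxnorm, ?_⟩
  have hfix : a + φ Tm x = c • x := fix c hdc.ne'
  rw [affAct, clm_eq_lin, hfix, norm_smul, hxnorm, mul_one, Real.norm_eq_abs,
    abs_of_pos hcpos, smul_smul, inv_mul_cancel₀ hcpos.ne', one_smul]
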